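/- arXiv:1810.00032 — 7 statements merged into one kernel-verified Lean document; each statement's English description precedes it below -/
import Mathlib

section
/- Let L be a bounded lattice with a unary operation ' such that x ∨ x' = 1 for all x, x ≤ y implies y' ≤ x' for all x, y, (x')' = x for all x, and x ≤ y implies y = x ∨ (y ∧ x') for all x, y (i.e., L is an orthomodular lattice). Define x ⊙ y := (x ∨ y') ∧ y and x → y := (y ∧ x) ∨ x'. Then for all x, y, z in L: x ⊙ y ≤ z if and only if x ≤ y → z (left adjointness). -/
/-- In an orthomodular lattice with Sasaki operations
`x ⊙ y := (x ⊔ c y) ⊓ y` and `x → y := (y ⊓ x) ⊔ c x`, left adjointness holds. -/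
theorem stmt_0 {L : Type*} [Lattice L] [BoundedOrder L] (c : L → L)
    (h1 : ∀ x : L, x ⊔ c x = ⊤)
    (h2 : ∀ x y : L, x ≤ y → c y ≤ c x)
    (h3 : ∀ x : L, c (c x) = x)
    (h4 : ∀ x y : L, x ≤ y → y = x ⊔ (y ⊓ c x)) :
    ∀ x y z : L, (x ⊔ c y) ⊓ y ≤ z ↔ x ≤ (z ⊓ y) ⊔ c y := by
  -- c ⊤ = ⊥
  have ctop : c (⊤ : L) = ⊥ := by
    have := h2 (c ⊥) ⊤ le_top
    rw [h3] at this
    exact le_antisymm this bot_le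
  -- u ⊓ c u = ⊥
  have hbot : ∀ u : L, u ⊓ c u = ⊥ := by
    intro u
    have h5 : c (c u ⊔ u) = ⊥ := by rw [sup_comm, h1, ctop]
    have l3 : c u ≤ c (u ⊓ c u) := h2 (u ⊓ c u) u inf_le_left
    have l4 : u ≤ c (u ⊓ c u) := by
      have := h2 (u ⊓ c u) (c u) inf_le_right; rwa [h3] at this
    have l5 : c u ⊔ u ≤ c (u ⊓ c u) := sup_le l3 l4
    have l6 := h2 _ _ l5
    rw [h3] at l6
    rw [h5] at l6
    exact le_antisymm l6 bot_le
  -- key lemma: a ≤ y → (a ⊔ c y) ⊓ y = a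
  have key : ∀ a y : L, a ≤ y → (a ⊔ c y) ⊓ y = a := by
    intro a y hay
    set b := (a ⊔ c y) ⊓ y with hb
    have hab : a ≤ b := le_inf le_sup_left hay
    have hom := h4 a b hab
    have h0 : b ⊓ c a = ⊥ := by
      have l1 : y ⊓ c a ≤ c (a ⊔ c y) := by
        have la : a ≤ c (y ⊓ c a) := by
          have := h2 (y ⊓ c a) (c a) inf_le_right
          calc a = c (c a) := (h3 a).symm
            _ ≤ c (y ⊓ c a) := this
        have lb : c y ≤ c (y ⊓ c a) := h2 _ _ inf_le_left
        have := h2 _ _ (sup_le la lb)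
        rwa [h3] at this
      have l2 : b ⊓ c a ≤ (a ⊔ c y) ⊓ c (a ⊔ c y) := by
        refine le_inf (le_trans inf_le_left inf_le_left) ?_
        exact le_trans (inf_le_inf_right _ inf_le_right) l1
      rw [hbot] at l2
      exact le_antisymm l2 bot_le
    rw [h0, sup_bot_eq] at hom
    exact hom
  intro x y z
  constructor
  · intro h
    have hsub : x ⊔ c y = c y ⊔ ((x ⊔ c y) ⊓ y) := by
      have := h4 (c y) (x ⊔ c y) le_sup_right
      rwa [h3] at this
    have hx : x ≤ c y ⊔ ((x ⊔ c y) ⊓ y) := hsub ▸ le_sup_left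
    have h2' : (x ⊔ c y) ⊓ y ≤ z ⊓ y := le_inf h inf_le_right
    calc x ≤ c y ⊔ ((x ⊔ c y) ⊓ y) := hx
      _ ≤ c y ⊔ (z ⊓ y) := sup_le_sup_left h2' _
      _ = (z ⊓ y) ⊔ c y := sup_comm _ _
  · intro h
    have : (x ⊔ c y) ⊓ y ≤ ((z ⊓ y) ⊔ c y) ⊓ y :=
      inf_le_inf_right _ (sup_le h le_sup_right)
    rw [key (z ⊓ y) y inf_le_right] at this
    exact this.trans inf_le_left
end

section
/- Let L be a bounded lattice with a unary operation ' such that x ∨ x' = 1 for all x, x ≤ y implies y' ≤ x' for all x, y, (x')' = x for all x, and x ≤ y implies y = x ∨ (y ∧ x') for all x, y (i.e., L is an orthomodular lattice). Define x ⊙ y := (x ∨ y') ∧ y and x → y := (y ∧ x) ∨ x'. Then for all x, y in L: (x → y) ⊙ x = x ∧ y (divisibility). -/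
/-- In an orthomodular lattice with Sasaki operations
`x ⊙ y := (x ⊔ c y) ⊓ y` and `x → y := (y ⊓ x) ⊔ c x`, divisibility
`(x → y) ⊙ x = x ⊓ y` holds. -/
theorem stmt_2 {L : Type*} [Lattice L] [BoundedOrder L] (c : L → L)
    (h1 : ∀ x : L, x ⊔ c x = ⊤)
    (h2 : ∀ x y : L, x ≤ y → c y ≤ c x)
    (h3 : ∀ x : L, c (c x) = x)
    (h4 : ∀ x y : L, x ≤ y → y = x ⊔ (y ⊓ c x)) :
    ∀ x y : L, (((y ⊓ x) ⊔ c x) ⊔ c x) ⊓ x = x ⊓ y := by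
  have hcbot : c (⊥ : L) = ⊤ := by
    have := h1 (⊥ : L); simpa using this
  have hctop : c (⊤ : L) = ⊥ := by rw [← hcbot, h3]
  -- De Morgan: c (u ⊔ v) = c u ⊓ c v
  have dm : ∀ u v : L, c (u ⊔ v) = c u ⊓ c v := by
    intro u v
    refine le_antisymm (le_inf (h2 _ _ le_sup_left) (h2 _ _ le_sup_right)) ?_
    have hu : u ≤ c (c u ⊓ c v) := by
      have := h2 (c u ⊓ c v) (c u) inf_le_left; rwa [h3] at this
    have hv : v ≤ c (c u ⊓ c v) := by
      have := h2 (c u ⊓ c v) (c v) inf_le_right; rwa [h3] at this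
    have := h2 (u ⊔ v) (c (c u ⊓ c v)) (sup_le hu hv)
    rwa [h3] at this
  -- b ⊓ c b = ⊥
  have hmeet : ∀ b : L, b ⊓ c b = ⊥ := by
    intro b
    have h5 : c (b ⊓ c b) = ⊤ := by
      have hb : c b ≤ c (b ⊓ c b) := h2 _ _ inf_le_left
      have hcb : b ≤ c (b ⊓ c b) := by
        have := h2 (b ⊓ c b) (c b) inf_le_right; rwa [h3] at this
      have hle : b ⊔ c b ≤ c (b ⊓ c b) := sup_le hcb hb
      rw [h1] at hle
      exact le_antisymm le_top hle
    calc b ⊓ c b = c (c (b ⊓ c b)) := (h3 _).symm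
      _ = c ⊤ := by rw [h5]
      _ = ⊥ := hctop
  -- key: a ≤ x → (a ⊔ c x) ⊓ x = a
  have key : ∀ a x : L, a ≤ x → (a ⊔ c x) ⊓ x = a := by
    intro a x hax
    set b := a ⊔ c x with hb
    have hcb : c b = c a ⊓ x := by rw [hb, dm, h3]
    have hab : a ≤ b ⊓ x := le_inf le_sup_left hax
    have h5 := h4 a (b ⊓ x) hab
    have h6 : (b ⊓ x) ⊓ c a ≤ b ⊓ c b := by
      refine le_inf (le_trans inf_le_left inf_le_left) ?_
      rw [hcb]
      exact le_inf inf_le_right (le_trans inf_le_left inf_le_right)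
    rw [hmeet b] at h6
    have h7 : (b ⊓ x) ⊓ c a = ⊥ := le_antisymm h6 bot_le
    rw [h7, sup_bot_eq] at h5
    exact h5
  intro x y
  have : ((y ⊓ x) ⊔ c x) ⊔ c x = (y ⊓ x) ⊔ c x := by rw [sup_assoc, sup_idem]
  rw [this, key (y ⊓ x) x inf_le_right, inf_comm]
end

section
/- Let A be a bounded lattice with binary operations ⊙ and → such that for all x, y, z in A: x ⊙ 1 = x, 1 ⊙ x = x, and x ⊙ y ≤ z if and only if x ≤ y → z (i.e., A is a left residuated l-groupoid). Define x' := x → 0, and assume that for all x, y in A: x ≤ y implies y' ≤ x' (antitony), (x')' = x (double negation law), x ⊙ y = (x ∨ y') ∧ y, and x ⊙ (x ∨ y) = x. Then for all a, b in A with a ≤ b: b = a ∨ (b ∧ a') (the orthomodular law). -/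
/-- In a left residuated l-groupoid (with `m` for `⊙`, `r` for `→`,
and `x' := r x ⊥`) satisfying antitony, double negation, `x ⊙ y = (x ⊔ y') ⊓ y`
and `x ⊙ (x ⊔ y) = x`, the orthomodular law holds. -/
theorem stmt_5 {A : Type*} [Lattice A] [BoundedOrder A]
    (m r : A → A → A)
    (hu1 : ∀ x : A, m x ⊤ = x)
    (hu2 : ∀ x : A, m ⊤ x = x)
    (hadj : ∀ x y z : A, m x y ≤ z ↔ x ≤ r y z)
    (hant : ∀ x y : A, x ≤ y → r y ⊥ ≤ r x ⊥)
    (hdn : ∀ x : A, r (r x ⊥) ⊥ = x)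
    (hsas : ∀ x y : A, m x y = (x ⊔ r y ⊥) ⊓ y)
    (habs : ∀ x y : A, m x (x ⊔ y) = x) :
    ∀ a b : A, a ≤ b → b = a ⊔ (b ⊓ r a ⊥) := by
  intro a b hab
  -- De Morgan for sup: (x ⊔ y)' = x' ⊓ y'
  have dm_sup : ∀ x y : A, r (x ⊔ y) ⊥ = r x ⊥ ⊓ r y ⊥ := by
    intro x y
    apply le_antisymm
    · exact le_inf (hant x (x ⊔ y) le_sup_left) (hant y (x ⊔ y) le_sup_right)
    · have hx : x ≤ r (r x ⊥ ⊓ r y ⊥) ⊥ := by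
        have h := hant (r x ⊥ ⊓ r y ⊥) (r x ⊥) inf_le_left
        rwa [hdn] at h
      have hy : y ≤ r (r x ⊥ ⊓ r y ⊥) ⊥ := by
        have h := hant (r x ⊥ ⊓ r y ⊥) (r y ⊥) inf_le_right
        rwa [hdn] at h
      have h := hant (x ⊔ y) (r (r x ⊥ ⊓ r y ⊥) ⊥) (sup_le hx hy)
      rwa [hdn] at h
  -- De Morgan for inf: (x ⊓ y)' = x' ⊔ y'
  have dm_inf : ∀ x y : A, r (x ⊓ y) ⊥ = r x ⊥ ⊔ r y ⊥ := by
    intro x y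
    have h := dm_sup (r x ⊥) (r y ⊥)
    rw [hdn, hdn] at h
    calc r (x ⊓ y) ⊥ = r (r (r x ⊥ ⊔ r y ⊥) ⊥) ⊥ := by rw [h]
      _ = r x ⊥ ⊔ r y ⊥ := hdn _
  -- key identity from habs + hsas with x = b', y = a'
  have key := habs (r b ⊥) (r a ⊥)
  rw [hsas] at key
  have hba : r b ⊥ ⊔ r a ⊥ = r a ⊥ := sup_eq_right.mpr (hant a b hab)
  rw [hba, hdn] at key
  have hab' : r b ⊥ ⊔ a = r b ⊥ ⊔ (b ⊓ a) := by rw [inf_eq_right.mpr hab]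
  -- key : (r b ⊥ ⊔ a) ⊓ r a ⊥ = r b ⊥
  -- take complements of both sides
  calc b = r (r b ⊥) ⊥ := (hdn b).symm
    _ = r ((r b ⊥ ⊔ a) ⊓ r a ⊥) ⊥ := by rw [key]
    _ = r (r b ⊥ ⊔ a) ⊥ ⊔ r (r a ⊥) ⊥ := dm_inf _ _
    _ = (r (r b ⊥) ⊥ ⊓ r a ⊥) ⊔ r (r a ⊥) ⊥ := by rw [dm_sup]
    _ = (b ⊓ r a ⊥) ⊔ a := by rw [hdn, hdn]
    _ = a ⊔ (b ⊓ r a ⊥) := sup_comm _ _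
end

section
/- Let A be a bounded lattice with binary operations ⊙ and → such that for all x, y, z in A: x ⊙ 1 = x, 1 ⊙ x = x, and x ⊙ y ≤ z if and only if x ≤ y → z (i.e., A is a left residuated l-groupoid). Define x' := x → 0, and assume that for all x, y in A: x ≤ y implies y' ≤ x' (antitony), (x')' = x (double negation law), x ⊙ y = (x ∨ y') ∧ y, and x ⊙ (x ∨ y) = x. Then for all a in A: a ∨ a' = 1. -/
/-- In a left residuated l-groupoid (with `m` for `⊙`, `r` for `→`,
and `x' := r x ⊥`) satisfying antitony, double negation, `x ⊙ y = (x ⊔ y') ⊓ y`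
and `x ⊙ (x ⊔ y) = x`, we have `a ⊔ a' = ⊤`. -/
theorem stmt_6 {A : Type*} [Lattice A] [BoundedOrder A]
    (m r : A → A → A)
    (hu1 : ∀ x : A, m x ⊤ = x)
    (hu2 : ∀ x : A, m ⊤ x = x)
    (hadj : ∀ x y z : A, m x y ≤ z ↔ x ≤ r y z)
    (hant : ∀ x y : A, x ≤ y → r y ⊥ ≤ r x ⊥)
    (hdn : ∀ x : A, r (r x ⊥) ⊥ = x)
    (hsas : ∀ x y : A, m x y = (x ⊔ r y ⊥) ⊓ y)
    (habs : ∀ x y : A, m x (x ⊔ y) = x) :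
    ∀ a : A, a ⊔ r a ⊥ = ⊤ := by
  intro a
  -- a' ⊓ a ≤ ⊥ : since a' ≤ r a ⊥, adjunction gives m a' a ≤ ⊥, and hsas computes m a' a.
  have hma : m (r a ⊥) a ≤ ⊥ := (hadj _ _ _).mpr le_rfl
  have hinf : r a ⊥ ⊓ a ≤ ⊥ := by
    have := hsas (r a ⊥) a
    simpa [this] using hma
  -- ⊥' = ⊤
  have hbot : r ⊥ ⊥ = ⊤ := by
    have : m ⊤ ⊥ ≤ ⊥ := by rw [hu2]
    exact le_antisymm le_top ((hadj _ _ _).mp this)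
  -- c := (a ⊔ a')' ≤ a' and c ≤ a, hence c = ⊥
  have hc1 : r (a ⊔ r a ⊥) ⊥ ≤ r a ⊥ := hant _ _ le_sup_left
  have hc2 : r (a ⊔ r a ⊥) ⊥ ≤ a := by
    have := hant _ _ (le_sup_right : r a ⊥ ≤ a ⊔ r a ⊥)
    rwa [hdn a] at this
  have hc : r (a ⊔ r a ⊥) ⊥ = ⊥ :=
    le_antisymm (le_trans (le_inf hc1 hc2) hinf) bot_le
  calc a ⊔ r a ⊥ = r (r (a ⊔ r a ⊥) ⊥) ⊥ := (hdn _).symm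
    _ = ⊤ := by rw [hc, hbot]
end

section
/- Let A be a bounded lattice with binary operations ⊙ and → such that for all x, y, z in A: x ⊙ 1 = x, 1 ⊙ x = x, and x ⊙ y ≤ z if and only if x ≤ y → z (i.e., A is a left residuated l-groupoid). Define x' := x → 0, and assume that for all x, y in A: x ≤ y implies y' ≤ x' (antitony), (x')' = x (double negation law), x ⊙ y = (x ∨ y') ∧ y, and x ⊙ (x ∨ y) = x. Then (A, ∨, ∧, ', 0, 1) is an orthomodular lattice; that is, for all x, y in A: x ∨ x' = 1, x ≤ y implies y' ≤ x', (x')' = x, and x ≤ y implies y = x ∨ (y ∧ x'). -/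
/-- In a left residuated l-groupoid (with `m` for `⊙`, `r` for `→`,
and `x' := r x ⊥`) satisfying antitony, double negation, `x ⊙ y = (x ⊔ y') ⊓ y`
and `x ⊙ (x ⊔ y) = x`, the structure `(A, ⊔, ⊓, ', ⊥, ⊤)` is an orthomodular
lattice. -/
theorem stmt_7 {A : Type*} [Lattice A] [BoundedOrder A]
    (m r : A → A → A)
    (hu1 : ∀ x : A, m x ⊤ = x)
    (hu2 : ∀ x : A, m ⊤ x = x)
    (hadj : ∀ x y z : A, m x y ≤ z ↔ x ≤ r y z)
    (hant : ∀ x y : A, x ≤ y → r y ⊥ ≤ r x ⊥)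
    (hdn : ∀ x : A, r (r x ⊥) ⊥ = x)
    (hsas : ∀ x y : A, m x y = (x ⊔ r y ⊥) ⊓ y)
    (habs : ∀ x y : A, m x (x ⊔ y) = x) :
    (∀ x : A, x ⊔ r x ⊥ = ⊤) ∧
    (∀ x y : A, x ≤ y → r y ⊥ ≤ r x ⊥) ∧
    (∀ x : A, r (r x ⊥) ⊥ = x) ∧
    (∀ x y : A, x ≤ y → y = x ⊔ (y ⊓ r x ⊥)) := by
  -- complement law: x ⊓ x' = ⊥
  have hcomp : ∀ x : A, x ⊓ r x ⊥ = ⊥ := by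
    intro x
    have h1 : m x (r x ⊥) ≤ ⊥ := (hadj x (r x ⊥) ⊥).mpr (le_of_eq (hdn x).symm)
    have h2 := hsas x (r x ⊥)
    rw [hdn, sup_idem] at h2
    rw [← h2]
    exact le_bot_iff.mp h1
  have hbot : r ⊥ ⊥ = (⊤ : A) := by
    have : m ⊤ (⊥ : A) ≤ ⊥ := le_of_eq (hu2 ⊥)
    exact top_le_iff.mp ((hadj ⊤ ⊥ ⊥).mp this)
  -- de Morgan for sup
  have hdms : ∀ a b : A, r (a ⊔ b) ⊥ = r a ⊥ ⊓ r b ⊥ := by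
    intro a b
    apply le_antisymm
    · exact le_inf (hant a _ le_sup_left) (hant b _ le_sup_right)
    · have ha : a ≤ r (r a ⊥ ⊓ r b ⊥) ⊥ := by
        have := hant (r a ⊥ ⊓ r b ⊥) (r a ⊥) inf_le_left
        rwa [hdn] at this
      have hb : b ≤ r (r a ⊥ ⊓ r b ⊥) ⊥ := by
        have := hant (r a ⊥ ⊓ r b ⊥) (r b ⊥) inf_le_right
        rwa [hdn] at this
      have := hant (a ⊔ b) _ (sup_le ha hb)
      rwa [hdn] at this
  have hdmi : ∀ a b : A, r (a ⊓ b) ⊥ = r a ⊥ ⊔ r b ⊥ := by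
    intro a b
    have : a ⊓ b = r (r a ⊥ ⊔ r b ⊥) ⊥ := by
      rw [hdms, hdn, hdn]
    rw [this, hdn]
  have hsup : ∀ x : A, x ⊔ r x ⊥ = ⊤ := by
    intro x
    have : r (x ⊔ r x ⊥) ⊥ = ⊥ := by
      rw [hdms, hdn, inf_comm, hcomp]
    have h := congrArg (fun t => r t ⊥) this
    simp only [hdn] at h
    rw [h, hbot]
  refine ⟨hsup, hant, hdn, ?_⟩
  intro x y hxy
  have h1 : r y ⊥ ≤ r x ⊥ := hant x y hxy
  have h2 : m (r y ⊥) (r x ⊥) = r y ⊥ := by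
    have := habs (r y ⊥) (r x ⊥)
    rwa [sup_eq_right.mpr h1] at this
  have h3 := hsas (r y ⊥) (r x ⊥)
  rw [hdn, h2] at h3
  -- h3 : r y ⊥ = (r y ⊥ ⊔ x) ⊓ r x ⊥
  have h4 := congrArg (fun t => r t ⊥) h3
  simp only [hdn] at h4
  rw [hdmi, hdms, hdn, hdn] at h4
  -- h4 : y = (y ⊓ r x ⊥) ⊔ x
  conv_lhs => rw [h4]
  exact sup_comm _ _
end

section
/- Let L be a bounded lattice with a unary operation ' such that x ∨ x' = 1 for all x, x ≤ y implies y' ≤ x' for all x, y, (x')' = x for all x, and x ≤ y implies y = x ∨ (y ∧ x') for all x, y (i.e., L is an orthomodular lattice). Define x ⊙ y := (x ∨ y') ∧ y and x → y := (y ∧ x) ∨ x'. Then (L, ∨, ∧, ⊙, →, 0, 1) is a left residuated l-groupoid satisfying divisibility, antitony, the double negation law and the identity x ⊙ (x ∨ y) = x; that is, for all x, y, z in L: x ⊙ 1 = x, 1 ⊙ x = x, x ⊙ y ≤ z if and only if x ≤ y → z, (x → y) ⊙ x = x ∧ y, x ≤ y implies (y → 0) ≤ (x → 0), ((x → 0)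 → 0) = x, x ⊙ (x ∨ y) = x, and x → 0 = x'. -/
/-- In an orthomodular lattice with Sasaki operations
`x ⊙ y := (x ⊔ c y) ⊓ y` and `x → y := (y ⊓ x) ⊔ c x`, the structure
`(L, ⊔, ⊓, ⊙, →, ⊥, ⊤)` is a left residuated l-groupoid satisfying
divisibility, antitony, double negation, `x ⊙ (x ⊔ y) = x` and `x → ⊥ = c x`. -/
theorem stmt_11 {L : Type*} [Lattice L] [BoundedOrder L] (c : L → L)
    (h1 : ∀ x : L, x ⊔ c x = ⊤)
    (h2 : ∀ x y : L, x ≤ y → c y ≤ c x)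
    (h3 : ∀ x : L, c (c x) = x)
    (h4 : ∀ x y : L, x ≤ y → y = x ⊔ (y ⊓ c x)) :
    ∀ m r : L → L → L, (∀ x y : L, m x y = (x ⊔ c y) ⊓ y) →
      (∀ x y : L, r x y = (y ⊓ x) ⊔ c x) →
      (∀ x : L, m x ⊤ = x) ∧
      (∀ x : L, m ⊤ x = x) ∧
      (∀ x y z : L, m x y ≤ z ↔ x ≤ r y z) ∧
      (∀ x y : L, m (r x y) x = x ⊓ y) ∧
      (∀ x y : L, x ≤ y → r y ⊥ ≤ r x ⊥) ∧
      (∀ x : L, r (r x ⊥) ⊥ = x) ∧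
      (∀ x y : L, m x (x ⊔ y) = x) ∧
      (∀ x : L, r x ⊥ = c x) := by
  intro m r hm hr
  have hcbot : c (⊥ : L) = ⊤ := by
    have := h1 (⊥ : L); simpa using this
  have hctop : c (⊤ : L) = ⊥ := by rw [← hcbot, h3]
  -- contraposition helpers
  have contra1 : ∀ u v : L, c u ≤ v → c v ≤ u := by
    intro u v h
    have := h2 _ _ h
    rwa [h3] at this
  have contra2 : ∀ u v : L, u ≤ c v → v ≤ c u := by
    intro u v h
    have := h2 _ _ h
    rwa [h3] at this
  -- De Morgan
  have dm_sup : ∀ u v : L, c (u ⊔ v) = c u ⊓ c v := by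
    intro u v
    apply le_antisymm
    · exact le_inf (h2 _ _ le_sup_left) (h2 _ _ le_sup_right)
    · apply contra2
      apply sup_le
      · exact contra2 _ _ inf_le_left
      · exact contra2 _ _ inf_le_right
  have dm_inf : ∀ u v : L, c (u ⊓ v) = c u ⊔ c v := by
    intro u v
    rw [← h3 (c u ⊔ c v), dm_sup, h3, h3]
  -- key lemma: if a ≤ y then (a ⊔ c y) ⊓ y = a
  have key : ∀ a y : L, a ≤ y → (a ⊔ c y) ⊓ y = a := by
    intro a y hay
    apply le_antisymm
    · have hb : c y ≤ c a := h2 _ _ hay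
      have hom : c a = c y ⊔ (c a ⊓ y) := by
        have := h4 (c y) (c a) hb
        rwa [h3] at this
      have h5 : c a ≤ c ((a ⊔ c y) ⊓ y) := by
        rw [dm_inf, dm_sup, h3]
        exact hom.le.trans (sup_comm _ _).le
      have h6 := contra2 _ _ h5
      rwa [h3] at h6
    · exact le_inf le_sup_left hay
  have h8 : ∀ x : L, r x ⊥ = c x := by intro x; rw [hr]; simp
  refine ⟨?_, ?_, ?_, ?_, ?_, ?_, ?_, ?_⟩
  · intro x; rw [hm, hctop]; simp
  · intro x; simp [hm]
  · -- adjointness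
    intro x y z
    rw [hm, hr]
    constructor
    · intro h
      have hom : x ⊔ c y = c y ⊔ ((x ⊔ c y) ⊓ y) := by
        have := h4 (c y) (x ⊔ c y) le_sup_right
        rwa [h3] at this
      calc x ≤ x ⊔ c y := le_sup_left
        _ = c y ⊔ ((x ⊔ c y) ⊓ y) := hom
        _ ≤ c y ⊔ (z ⊓ y) := sup_le_sup_left (le_inf h inf_le_right) _
        _ = (z ⊓ y) ⊔ c y := sup_comm _ _
    · intro h
      have : (x ⊔ c y) ⊓ y ≤ ((z ⊓ y) ⊔ c y) ⊓ y :=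
        inf_le_inf_right _ (sup_le h le_sup_right)
      rw [key (z ⊓ y) y inf_le_right] at this
      exact le_trans this inf_le_left
  · -- divisibility
    intro x y
    rw [hm, hr, sup_assoc, sup_idem, key (y ⊓ x) x inf_le_right, inf_comm]
  · intro x y hxy
    rw [h8, h8]
    exact h2 _ _ hxy
  · intro x
    rw [h8, h8, h3]
  · intro x y
    rw [hm]
    exact key x (x ⊔ y) le_sup_left
  · exact h8
end

section
/- Let A be a bounded lattice with binary operations ⊙ and → such that for all x, y, z in A: x ⊙ 1 = x, 1 ⊙ x = x, and x ⊙ y ≤ z if and only if x ≤ y → z (i.e., A is a left residuated l-groupoid). Define x' := x → 0, and assume that for all x, y in A: x ≤ y implies y' ≤ x' (antitony), (x')' = x (double negation law), x ⊙ y = (x ∨ y') ∧ y, and x ⊙ (x ∨ y) = x. Then for all a, b in A with a ≤ b: (b' ⊙ a')' = a ∨ (b ∧ a'). -/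
/-- In a left residuated l-groupoid (with `m` for `⊙`, `r` for `→`,
and `x' := r x ⊥`) satisfying antitony, double negation, `x ⊙ y = (x ⊔ y') ⊓ y`
and `x ⊙ (x ⊔ y) = x`, for `a ≤ b` we have `(b' ⊙ a')' = a ⊔ (b ⊓ a')`. -/
theorem stmt_13 {A : Type*} [Lattice A] [BoundedOrder A]
    (m r : A → A → A)
    (hu1 : ∀ x : A, m x ⊤ = x)
    (hu2 : ∀ x : A, m ⊤ x = x)
    (hadj : ∀ x y z : A, m x y ≤ z ↔ x ≤ r y z)
    (hant : ∀ x y : A, x ≤ y → r y ⊥ ≤ r x ⊥)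
    (hdn : ∀ x : A, r (r x ⊥) ⊥ = x)
    (hsas : ∀ x y : A, m x y = (x ⊔ r y ⊥) ⊓ y)
    (habs : ∀ x y : A, m x (x ⊔ y) = x) :
    ∀ a b : A, a ≤ b → r (m (r b ⊥) (r a ⊥)) ⊥ = a ⊔ (b ⊓ r a ⊥) := by
  intro a b _
  set n : A → A := fun x => r x ⊥ with hn
  have hdm : ∀ x y : A, n (x ⊓ y) = n x ⊔ n y := by
    intro x y
    apply le_antisymm
    · have h1 : n (n x ⊔ n y) ≤ x := by
        have := hant (n x) (n x ⊔ n y) le_sup_left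
        simpa [hn, hdn] using this
      have h2 : n (n x ⊔ n y) ≤ y := by
        have := hant (n y) (n x ⊔ n y) le_sup_right
        simpa [hn, hdn] using this
      have := hant (n (n x ⊔ n y)) (x ⊓ y) (le_inf h1 h2)
      simpa [hn, hdn] using this
    · exact sup_le (hant _ _ inf_le_left) (hant _ _ inf_le_right)
  calc r (m (r b ⊥) (r a ⊥)) ⊥
      = n ((n b ⊔ a) ⊓ n a) := by rw [hsas]; simp [hn, hdn]
    _ = n (n b ⊔ a) ⊔ n (n a) := hdm _ _
    _ = a ⊔ (b ⊓ n a) := by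
        show r (r b ⊥ ⊔ a) ⊥ ⊔ r (r a ⊥) ⊥ = a ⊔ b ⊓ r a ⊥
        rw [hdn]
        have h3 : r (r b ⊥ ⊔ a) ⊥ = b ⊓ r a ⊥ := by
          have h4 := hdm b (r a ⊥)
          have h5 := congrArg (fun t => r t ⊥) h4
          simp only [hn, hdn] at h5 ⊢
          exact h5.symm
        rw [h3, sup_comm]
    _ = a ⊔ (b ⊓ r a ⊥) := rfl
end
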